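/- Fix nonnegative integers α_1,…,α_p with α_1+⋯+α_p = n. The number of sequences (U_1,…,U_p) of subspaces of an n-dimensional vector space V over F_q with dim U_i = α_i and V = U_1 ⊕ ⋯ ⊕ U_p (equivalently, the U_i span V and the dimensions sum to n) equals the Gaussian multinomial coefficient [n; α_1,…,α_p]_q times q^{s_2(α)}, where s_2(α) = Σ_{i<j} α_i α_j. -/
import Mathlib


open Finset

/-- The `q`-factorial `n!_q = (q^n - 1)(q^(n-1) - 1) ⋯ (q - 1)`. -/
def qFact (q n : ℕ) : ℕ := ∏ i ∈ Finset.range n, (q ^ (i + 1) - 1)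

/-- The Gaussian multinomial coefficient `[n; α_1, …, α_p]_q = n!_q / (α_1!_q ⋯ α_p!_q)`. -/
noncomputable def gaussMultinomial (q n : ℕ) {p : ℕ} (α : Fin p → ℕ) : ℚ :=
  (qFact q n : ℚ) / ∏ i, (qFact q (α i) : ℚ)

/-- The second elementary symmetric function `s_2(α) = ∑_{i<j} α_i α_j`. -/
def s2 {p : ℕ} (α : Fin p → ℕ) : ℕ :=
  ∑ i, ∑ j ∈ Finset.univ.filter (fun j : Fin p => i < j), α i * α j

/-- The number of Meshalkin sequences `(U_1, …, U_p)` of subspaces of an `n`-dimensional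
`F_q`-vector space `V` with `dim U_i = α_i` and `V = U_1 ⊕ ⋯ ⊕ U_p` (equivalently, the
`U_i` span `V` and the dimensions sum to `n`) equals `[n; α]_q · q^(s_2(α))`. -/

lemma prod_pow_sub_pow (q m : ℕ) :
    ∏ i ∈ range m, (q ^ m - q ^ i) = q ^ (∑ i ∈ range m, i) * qFact q m := by
  have h1 : ∀ i ∈ range m, q ^ m - q ^ i = q ^ i * (q ^ (m - i) - 1) := by
    intro i hi
    rw [Finset.mem_range] at hi
    rw [Nat.mul_sub, mul_one, ← pow_add]
    congr 2
    omega
  rw [Finset.prod_congr rfl h1, Finset.prod_mul_distrib, Finset.prod_pow_eq_pow_sum]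
  congr 1
  rw [qFact, ← Finset.prod_range_reflect (fun i => q ^ (i + 1) - 1) m]
  apply Finset.prod_congr rfl
  intro i hi
  rw [Finset.mem_range] at hi
  congr 2
  omega

lemma sq_sum_eq {p : ℕ} (α : Fin p → ℕ) :
    (∑ i, α i) * (∑ i, α i) = (∑ i, α i * α i) + 2 * s2 α := by
  rw [Finset.sum_mul_sum, s2]
  have hsplit : ∀ i : Fin p, (∑ j, α i * α j) =
      (∑ j ∈ univ.filter (fun j => i < j), α i * α j)
      + ((∑ j ∈ univ.filter (fun j => j < i), α i * α j) + α i * α i) := by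
    intro i
    rw [← Finset.sum_filter_add_sum_filter_not univ (fun j => i < j) (fun j => α i * α j)]
    congr 1
    have : univ.filter (fun j : Fin p => ¬ i < j)
        = insert i (univ.filter (fun j : Fin p => j < i)) := by
      ext j
      simp only [Finset.mem_filter, Finset.mem_insert, Finset.mem_univ, true_and, not_lt,
        le_iff_lt_or_eq]
      exact or_comm
    rw [this, Finset.sum_insert (by simp)]
    ring
  rw [Finset.sum_congr rfl (fun i _ => hsplit i), Finset.sum_add_distrib,
    Finset.sum_add_distrib]
  have hswap : (∑ i, ∑ j ∈ univ.filter (fun j : Fin p => j < i), α i * α j)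
      = ∑ i, ∑ j ∈ univ.filter (fun j : Fin p => i < j), α i * α j := by
    rw [Finset.sum_comm' (t' := univ) (s' := fun j => univ.filter (fun i : Fin p => j < i))]
    · apply Finset.sum_congr rfl; intro i _
      apply Finset.sum_congr rfl; intro j _; ring
    · intro i j; simp
  rw [hswap]; ring

lemma two_T (m : ℕ) : 2 * (∑ i ∈ range m, i) + m = m * m := by
  have h := Finset.sum_range_id_mul_two m
  have h2 : m * (m - 1) + m = m * m := by
    cases m with
    | zero => simp
    | succ k => simp only [Nat.succ_sub_one]; ring
  omega

lemma T_eq {p : ℕ} (α : Fin p → ℕ) :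
    ∑ i ∈ range (∑ i, α i), i = (∑ i, ∑ j ∈ range (α i), j) + s2 α := by
  apply Nat.eq_of_mul_eq_mul_left (show 0 < 2 by norm_num)
  have h1 := two_T (∑ i, α i)
  have h3 := sq_sum_eq α
  have h4 : ∑ i, (2 * (∑ j ∈ range (α i), j) + α i) = ∑ i, α i * α i :=
    Finset.sum_congr rfl (fun i _ => two_T (α i))
  rw [Finset.sum_add_distrib, ← Finset.mul_sum] at h4
  linarith


section
variable {F : Type*} [Field F] {V : Type*} [AddCommGroup V] [Module F V] [FiniteDimensional F V]
variable {p : ℕ} {α : Fin p → ℕ}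

/-- Combining linearly independent families in each `a i` gives a linearly independent family. -/
lemma combine_li (hα : ∑ i, α i = Module.finrank F V)
    (a : Fin p → Submodule F V) (h1 : ∀ i, Module.finrank F (a i) = α i)
    (h2 : (⨆ i, a i) = ⊤)
    (t : ∀ i, Fin (α i) → a i) (ht : ∀ i, LinearIndependent F (t i)) :
    LinearIndependent F (fun x : Σ i, Fin (α i) => (t x.1 x.2 : V)) ∧
    ∀ i, Submodule.span F (Set.range fun j => (t i j : V)) = a i := by
  have hspan : ∀ i, Submodule.span F (Set.range (t i)) = ⊤ := by
    intro i
    apply Submodule.eq_top_of_finrank_eq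
    rw [finrank_span_eq_card (ht i), Fintype.card_fin, h1]
  have hspanV : ∀ i, Submodule.span F (Set.range fun j => (t i j : V)) = a i := by
    intro i
    have : (Set.range fun j => (t i j : V)) = (a i).subtype '' (Set.range (t i)) := by
      rw [← Set.range_comp]; rfl
    rw [this, ← Submodule.map_span, hspan i, Submodule.map_top, Submodule.range_subtype]
  refine ⟨?_, hspanV⟩
  have hr : Submodule.span F (Set.range fun x : Σ i, Fin (α i) => (t x.1 x.2 : V)) = ⊤ := by
    have : (Set.range fun x : Σ i, Fin (α i) => (t x.1 x.2 : V))
        = ⋃ i, Set.range fun j => (t i j : V) := Set.range_sigma_eq_iUnion_range _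
    rw [this, Submodule.span_iUnion]
    simp_rw [hspanV]
    exact h2
  rw [linearIndependent_iff_card_eq_finrank_span]
  rw [Set.finrank, hr, finrank_top, Fintype.card_sigma]
  simp [hα]

/-- Splitting a linearly independent family into blocks. -/
lemma split_li (hα : ∑ i, α i = Module.finrank F V)
    (s : (Σ i, Fin (α i)) → V) (hs : LinearIndependent F s) :
    (∀ i, Module.finrank F (Submodule.span F (Set.range fun j => s ⟨i, j⟩)) = α i) ∧
    (⨆ i, Submodule.span F (Set.range fun j => s ⟨i, j⟩)) = ⊤ := by
  have hbl : ∀ i, LinearIndependent F (fun j => s ⟨i, j⟩) :=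
    fun i => hs.comp (Sigma.mk i) sigma_mk_injective
  constructor
  · intro i
    rw [finrank_span_eq_card (hbl i), Fintype.card_fin]
  · have : (⨆ i, Submodule.span F (Set.range fun j => s ⟨i, j⟩))
        = Submodule.span F (Set.range s) := by
      rw [← Submodule.span_iUnion, ← Set.range_sigma_eq_iUnion_range]
    rw [this]
    apply Submodule.eq_top_of_finrank_eq
    rw [finrank_span_eq_card hs]
    simp [hα]


/-- The key bijection. -/
lemma card_eq (hα : ∑ i, α i = Module.finrank F V) :
    Nat.card {s : (Σ i, Fin (α i)) → V // LinearIndependent F s} =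
    Nat.card (Σ a : {a : Fin p → Submodule F V //
        (∀ i, Module.finrank F (a i) = α i) ∧ (⨆ i, a i) = ⊤},
      ∀ i, {t : Fin (α i) → (a.1 i) // LinearIndependent F t}) := by
  refine (Nat.card_eq_of_bijective (fun x => ⟨fun y => ((x.2 y.1).1 y.2 : V),
    (combine_li hα x.1.1 x.1.2.1 x.1.2.2 (fun i => (x.2 i).1) (fun i => (x.2 i).2)).1⟩) ?_).symm
  constructor
  · rintro ⟨⟨a, ha1, ha2⟩, t⟩ ⟨⟨a', ha1', ha2'⟩, t'⟩ h
    have hval : ∀ y : Σ i, Fin (α i), ((t y.1).1 y.2 : V) = ((t' y.1).1 y.2 : V) := by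
      intro y
      exact congrFun (congrArg Subtype.val h) y
    have haa : a = a' := by
      funext i
      rw [← (combine_li hα a ha1 ha2 (fun i => (t i).1) (fun i => (t i).2)).2 i,
        ← (combine_li hα a' ha1' ha2' (fun i => (t' i).1) (fun i => (t' i).2)).2 i]
      have hfun : (fun j : Fin (α i) => ((t i).1 j : V)) = (fun j => ((t' i).1 j : V)) :=
        funext fun j => hval ⟨i, j⟩
      rw [hfun]
    subst haa
    have htt : t = t' := by
      funext i
      apply Subtype.ext
      funext j
      apply Subtype.ext
      exact hval ⟨i, j⟩
    rw [htt]
  · rintro ⟨s, hs⟩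
    obtain ⟨h1, h2⟩ := split_li hα s hs
    set a : Fin p → Submodule F V := fun i => Submodule.span F (Set.range fun j => s ⟨i, j⟩)
      with ha
    have hmem : ∀ (i : Fin p) (j : Fin (α i)), s ⟨i, j⟩ ∈ a i :=
      fun i j => Submodule.subset_span (Set.mem_range_self j)
    have hti : ∀ i, LinearIndependent F (fun j => (⟨s ⟨i, j⟩, hmem i j⟩ : a i)) := by
      intro i
      apply LinearIndependent.of_comp (a i).subtype
      exact hs.comp (Sigma.mk i) sigma_mk_injective
    refine ⟨⟨⟨a, h1, h2⟩, fun i => ⟨fun j => ⟨s ⟨i, j⟩, hmem i j⟩, hti i⟩⟩, ?_⟩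
    apply Subtype.ext
    funext y
    rfl
end

theorem count_meshalkin_sequences (q n p : ℕ) (α : Fin p → ℕ) (hα : ∑ i, α i = n)
    (F : Type*) [Field F] [Fintype F] (hq : Fintype.card F = q)
    (V : Type*) [AddCommGroup V] [Module F V] [FiniteDimensional F V]
    (hn : Module.finrank F V = n) :
    (Nat.card {a : Fin p → Submodule F V //
        (∀ i, Module.finrank F (a i) = α i) ∧ (⨆ i, a i) = ⊤} : ℚ) =
      gaussMultinomial q n α * (q : ℚ) ^ (s2 α) := by
  classical
  subst hq hn
  set n := Module.finrank F V with hn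
  set q := Fintype.card F with hq
  haveI : Finite V := Module.finite_of_finite F
  haveI : Finite (Submodule F V) :=
    Finite.of_injective (SetLike.coe : Submodule F V → Set V) SetLike.coe_injective
  set X := {a : Fin p → Submodule F V //
      (∀ i, Module.finrank F (a i) = α i) ∧ (⨆ i, a i) = ⊤} with hX
  -- count of linearly independent sigma-indexed families
  have hcardι : Fintype.card (Σ i, Fin (α i)) = n := by simp [hα]
  have hB : Nat.card {s : (Σ i, Fin (α i)) → V // LinearIndependent F s}
      = ∏ i ∈ range n, (q ^ n - q ^ i) := by
    have e : (Σ i, Fin (α i)) ≃ Fin n := Fintype.equivFinOfCardEq hcardι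
    have eq1 : {s : (Σ i, Fin (α i)) → V // LinearIndependent F s}
        ≃ {s : Fin n → V // LinearIndependent F s} :=
      Equiv.subtypeEquiv (Equiv.arrowCongr e (Equiv.refl V)) (by
        intro s
        exact (linearIndependent_equiv' e.symm (by ext x; simp [Equiv.arrowCongr])).symm)
    rw [Nat.card_congr eq1, card_linearIndependent (le_refl n), ← hq, ← hn,
      Fin.prod_univ_eq_prod_range (fun i => q ^ n - q ^ i)]
  -- fibers
  have hFiber : ∀ (a : X) (i : Fin p),
      Nat.card {t : Fin (α i) → (a.1 i) // LinearIndependent F t}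
      = ∏ j ∈ range (α i), (q ^ (α i) - q ^ j) := by
    intro a i
    have hk : α i ≤ Module.finrank F (a.1 i) := (a.2.1 i).ge
    rw [card_linearIndependent hk, ← hq]
    rw [Fin.prod_univ_eq_prod_range (fun j => q ^ Module.finrank F (a.1 i) - q ^ j)]
    rw [a.2.1 i]
  -- main count
  haveI : Fintype X := Fintype.ofFinite X
  haveI : ∀ (a : X) (i : Fin p), Fintype {t : Fin (α i) → (a.1 i) // LinearIndependent F t} :=
    fun a i => Fintype.ofFinite _
  have hpi : ∀ a : X, Fintype.card (∀ i, {t : Fin (α i) → (a.1 i) // LinearIndependent F t})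
      = ∏ i, ∏ j ∈ range (α i), (q ^ (α i) - q ^ j) := by
    intro a
    rw [← Nat.card_eq_fintype_card, Nat.card_pi]
    exact Finset.prod_congr rfl fun i _ => hFiber a i
  have hsig : Nat.card (Σ a : X, ∀ i, {t : Fin (α i) → (a.1 i) // LinearIndependent F t})
      = Nat.card X * ∏ i, ∏ j ∈ range (α i), (q ^ (α i) - q ^ j) := by
    rw [Nat.card_eq_fintype_card, Fintype.card_sigma,
      Finset.sum_congr rfl fun a _ => hpi a, Finset.sum_const, Finset.card_univ,
      smul_eq_mul, Nat.card_eq_fintype_card]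
  have hcount : Nat.card X * ∏ i, ∏ j ∈ range (α i), (q ^ (α i) - q ^ j)
      = ∏ i ∈ range n, (q ^ n - q ^ i) := by
    rw [← hB, card_eq (by rw [hα]), hsig]
  -- arithmetic
  have hq2 : 1 < q := Fintype.one_lt_card
  have hqFact_pos : ∀ m : ℕ, 0 < qFact q m := by
    intro m
    apply Finset.prod_pos
    intro i _
    have : 1 < q ^ (i + 1) := Nat.one_lt_pow (Nat.succ_ne_zero i) hq2
    omega
  set TD := ∑ i, ∑ j ∈ range (α i), j with hTD
  have hDnat : ∏ i, ∏ j ∈ range (α i), (q ^ (α i) - q ^ j)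
      = q ^ TD * ∏ i, qFact q (α i) := by
    rw [Finset.prod_congr rfl (fun i (_ : i ∈ univ) => prod_pow_sub_pow q (α i)),
      Finset.prod_mul_distrib, Finset.prod_pow_eq_pow_sum]
  have hNnat : ∏ i ∈ range n, (q ^ n - q ^ i) = q ^ (TD + s2 α) * qFact q n := by
    rw [prod_pow_sub_pow]
    congr 2
    rw [← hα, T_eq]
  rw [hDnat, hNnat] at hcount
  have hcast : (Nat.card X : ℚ) * ((q : ℚ) ^ TD * ∏ i, (qFact q (α i) : ℚ))
      = (q : ℚ) ^ TD * (q : ℚ) ^ (s2 α) * qFact q n := by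
    have := congrArg (fun m : ℕ => (m : ℚ)) hcount
    push_cast at this
    rw [pow_add] at this
    linarith [this]
  have hq0 : (q : ℚ) ≠ 0 := by positivity
  have hprod_ne : (∏ i, (qFact q (α i) : ℚ)) ≠ 0 := by
    apply Finset.prod_ne_zero_iff.2
    intro i _
    exact_mod_cast (hqFact_pos (α i)).ne'
  rw [gaussMultinomial, div_mul_eq_mul_div, eq_div_iff hprod_ne]
  apply mul_left_cancel₀ (pow_ne_zero TD hq0)
  calc (q : ℚ) ^ TD * ((Nat.card X : ℚ) * ∏ i, (qFact q (α i) : ℚ))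
      = (Nat.card X : ℚ) * ((q : ℚ) ^ TD * ∏ i, (qFact q (α i) : ℚ)) := by ring
    _ = (q : ℚ) ^ TD * (q : ℚ) ^ (s2 α) * qFact q n := hcast
    _ = (q : ℚ) ^ TD * ((qFact q n : ℚ) * (q : ℚ) ^ (s2 α)) := by ring
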